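/- For all n ≥ 0 and k ≥ 0, the four counts b_{n,k}({213,231}), b_{n,k}({132,312}), b_{n,k}({213,312}), and b_{n,k}({132,231}) are all equal. That is, the pattern sets {213,231}, {132,312}, {213,312}, and {132,231} are bdes-Wilf equivalent. -/

import Mathlib

open scoped Classical

/-- A permutation `π` of `Fin n` contains the pattern `σ` (a permutation of `Fin m`)
if some subsequence of the one-line notation of `π` standardizes to `σ`. -/
def Contains {n m : ℕ} (π : Equiv.Perm (Fin n)) (σ : Equiv.Perm (Fin m)) : Prop :=
  ∃ f : Fin m → Fin n, StrictMono f ∧ ∀ a b : Fin m, σ a < σ b ↔ π (f a) < π (f b)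

/-- `π` avoids the pattern `σ`. -/
def Avoids {n m : ℕ} (π : Equiv.Perm (Fin n)) (σ : Equiv.Perm (Fin m)) : Prop :=
  ¬ Contains π σ

/-- The pattern 123 (identity, in 0-indexed one-line notation `[0,1,2]`). -/
def perm123 : Equiv.Perm (Fin 3) := 1

/-- The pattern 132 (0-indexed one-line notation `[0,2,1]`). -/
def perm132 : Equiv.Perm (Fin 3) := ⟨![0, 2, 1], ![0, 2, 1], by decide, by decide⟩

/-- The pattern 213 (0-indexed one-line notation `[1,0,2]`). -/
def perm213 : Equiv.Perm (Fin 3) := ⟨![1, 0, 2], ![1, 0, 2], by decide, by decide⟩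

/-- The pattern 231 (0-indexed one-line notation `[1,2,0]`). -/
def perm231 : Equiv.Perm (Fin 3) := ⟨![1, 2, 0], ![2, 0, 1], by decide, by decide⟩

/-- The pattern 312 (0-indexed one-line notation `[2,0,1]`). -/
def perm312 : Equiv.Perm (Fin 3) := ⟨![2, 0, 1], ![1, 2, 0], by decide, by decide⟩

/-- The pattern 321 (0-indexed one-line notation `[2,1,0]`). -/
def perm321 : Equiv.Perm (Fin 3) := ⟨![2, 1, 0], ![2, 1, 0], by decide, by decide⟩

/-- The number of big descents of `π`: 0-indexed positions `k` with `π k > π (k+1) + 1`. -/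
def bdes {n : ℕ} (π : Equiv.Perm (Fin n)) : ℕ :=
  ((Finset.range n).filter fun k =>
    ∃ hk : k + 1 < n, (π ⟨k + 1, hk⟩ : ℕ) + 1 < (π ⟨k, Nat.lt_of_succ_lt hk⟩ : ℕ)).card


/-! ### Auxiliary machinery -/

/-- Reverse-complement of a permutation. -/
def rcPerm {n : ℕ} (π : Equiv.Perm (Fin n)) : Equiv.Perm (Fin n) :=
  Fin.revPerm * π * Fin.revPerm

lemma rcPerm_rcPerm {n : ℕ} (π : Equiv.Perm (Fin n)) : rcPerm (rcPerm π) = π := by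
  ext x; simp [rcPerm, Equiv.Perm.mul_apply, Fin.rev_rev]

lemma rcPerm_apply {n : ℕ} (π : Equiv.Perm (Fin n)) (x : Fin n) :
    rcPerm π x = (π x.rev).rev := rfl

lemma contains_rcPerm {n m : ℕ} {π : Equiv.Perm (Fin n)} {σ : Equiv.Perm (Fin m)}
    (h : Contains π σ) : Contains (rcPerm π) (rcPerm σ) := by
  obtain ⟨f, hf, hc⟩ := h
  refine ⟨fun a => (f a.rev).rev, fun a b hab => ?_, fun a b => ?_⟩
  · exact Fin.rev_lt_rev.mpr (hf (Fin.rev_lt_rev.mpr hab))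
  · simp only [rcPerm_apply, Fin.rev_rev, Fin.rev_lt_rev]
    exact (hc b.rev a.rev)

lemma contains_rcPerm_iff {n m : ℕ} {π : Equiv.Perm (Fin n)} {σ : Equiv.Perm (Fin m)} :
    Contains (rcPerm π) (rcPerm σ) ↔ Contains π σ :=
  ⟨fun h => by simpa [rcPerm_rcPerm] using contains_rcPerm h, contains_rcPerm⟩

lemma avoids_rcPerm_iff {n m : ℕ} {π : Equiv.Perm (Fin n)} {σ : Equiv.Perm (Fin m)} :
    Avoids (rcPerm π) σ ↔ Avoids π (rcPerm σ) := by
  unfold Avoids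
  rw [show σ = rcPerm (rcPerm σ) from (rcPerm_rcPerm σ).symm, contains_rcPerm_iff,
    rcPerm_rcPerm]

lemma contains_inv {n m : ℕ} {π : Equiv.Perm (Fin n)} {σ : Equiv.Perm (Fin m)}
    (h : Contains π σ) : Contains π⁻¹ σ⁻¹ := by
  obtain ⟨f, hf, hc⟩ := h
  refine ⟨fun a => π (f (σ⁻¹ a)), fun a b hab => ?_, fun a b => ?_⟩
  · exact (hc (σ⁻¹ a) (σ⁻¹ b)).mp (by simpa using hab)
  · simp only [Equiv.Perm.inv_def, Equiv.symm_apply_apply]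
    exact (hf.lt_iff_lt).symm

lemma contains_inv_iff {n m : ℕ} {π : Equiv.Perm (Fin n)} {σ : Equiv.Perm (Fin m)} :
    Contains π⁻¹ σ⁻¹ ↔ Contains π σ :=
  ⟨fun h => by simpa using contains_inv h, contains_inv⟩

lemma avoids_inv_iff {n m : ℕ} {π : Equiv.Perm (Fin n)} {σ : Equiv.Perm (Fin m)} :
    Avoids π⁻¹ σ ↔ Avoids π σ⁻¹ := by
  unfold Avoids
  rw [show σ = (σ⁻¹)⁻¹ from (inv_inv σ).symm, contains_inv_iff, inv_inv]

lemma strictMono3 {n : ℕ} {i j k : Fin n} (hij : i < j) (hjk : j < k) :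
    StrictMono ![i, j, k] := by
  intro a b hab
  fin_cases a <;> fin_cases b <;>
    first
      | exact hij | exact hjk | exact hij.trans hjk
      | exact absurd hab (by decide)

lemma contains_of_mid_first {n : ℕ} {π : Equiv.Perm (Fin n)} {i j k : Fin n}
    (hij : i < j) (hjk : j < k) (h1 : π j < π i) (h2 : π i < π k) :
    Contains π perm213 := by
  have h3 : π j < π k := h1.trans h2
  refine ⟨![i, j, k], strictMono3 hij hjk, fun a b => ?_⟩
  fin_cases a <;> fin_cases b <;>
    first
      | exact iff_of_true (by decide) h1
      | exact iff_of_true (by decide) h2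
      | exact iff_of_true (by decide) h3
      | exact iff_of_false (by decide) (lt_irrefl _)
      | exact iff_of_false (by decide) (asymm h1)
      | exact iff_of_false (by decide) (asymm h2)
      | exact iff_of_false (by decide) (asymm h3)

lemma contains_of_mid_first' {n : ℕ} {π : Equiv.Perm (Fin n)} {i j k : Fin n}
    (hij : i < j) (hjk : j < k) (h1 : π k < π i) (h2 : π i < π j) :
    Contains π perm231 := by
  have h3 : π k < π j := h1.trans h2
  refine ⟨![i, j, k], strictMono3 hij hjk, fun a b => ?_⟩
  fin_cases a <;> fin_cases b <;>
    first
      | exact iff_of_true (by decide) h1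
      | exact iff_of_true (by decide) h2
      | exact iff_of_true (by decide) h3
      | exact iff_of_false (by decide) (lt_irrefl _)
      | exact iff_of_false (by decide) (asymm h1)
      | exact iff_of_false (by decide) (asymm h2)
      | exact iff_of_false (by decide) (asymm h3)

lemma P_of_avoids {n : ℕ} {π : Equiv.Perm (Fin n)}
    (h1 : Avoids π perm213) (h2 : Avoids π perm231) :
    ∀ i j k : Fin n, i < j → i < k → π j < π i → π i < π k → False := by
  intro i j k hij hik hji hik'
  rcases lt_trichotomy j k with h | h | h
  · exact h1 (contains_of_mid_first hij h hji hik')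
  · subst h; exact absurd (hji.trans hik') (lt_irrefl _)
  · exact h2 (contains_of_mid_first' hik h hji hik')

/-- one-line value of `π` at position `k`, as a natural number. -/
noncomputable def pv {n : ℕ} (π : Equiv.Perm (Fin n)) (k : ℕ) : ℕ :=
  if h : k < n then (π ⟨k, h⟩ : ℕ) else 0

lemma pv_lt {n : ℕ} (π : Equiv.Perm (Fin n)) {k : ℕ} (h : k < n) : pv π k < n := by
  rw [pv, dif_pos h]; exact Fin.isLt _

lemma pv_inj {n : ℕ} (π : Equiv.Perm (Fin n)) {k l : ℕ} (hk : k < n) (hl : l < n)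
    (h : pv π k = pv π l) : k = l := by
  rw [pv, dif_pos hk, pv, dif_pos hl] at h
  exact congrArg Fin.val (π.injective (Fin.val_injective h))

lemma pv_inv {n : ℕ} (π : Equiv.Perm (Fin n)) {a b : ℕ} (ha : a < n) (hb : b < n) :
    pv π⁻¹ b = a ↔ pv π a = b := by
  rw [pv, dif_pos hb, pv, dif_pos ha]
  constructor
  · rintro h
    have : π⁻¹ ⟨b, hb⟩ = ⟨a, ha⟩ := Fin.ext h
    rw [← this, Equiv.Perm.inv_def, Equiv.apply_symm_apply]
  · rintro h
    have : π ⟨a, ha⟩ = ⟨b, hb⟩ := Fin.ext h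
    rw [← this, Equiv.Perm.inv_def, Equiv.symm_apply_apply]

lemma pv_eq {n : ℕ} (π : Equiv.Perm (Fin n)) {k : ℕ} (h : k < n) :
    pv π k = (π ⟨k, h⟩ : ℕ) := dif_pos h

lemma pv_rcPerm {n : ℕ} (π : Equiv.Perm (Fin n)) {k : ℕ} (h : k < n) :
    pv (rcPerm π) k = n - 1 - pv π (n - 1 - k) := by
  have h2 : n - 1 - k < n := by omega
  rw [pv, dif_pos h, pv, dif_pos h2]
  have hthis : (rcPerm π) ⟨k, h⟩ = (π (⟨k, h⟩ : Fin n).rev).rev := rfl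
  have e1 : (⟨k, h⟩ : Fin n).rev = ⟨n - 1 - k, h2⟩ := by
    ext; simp [Fin.val_rev]; omega
  rw [hthis, e1, Fin.val_rev]
  omega

lemma mem_bdes_filter_iff {n : ℕ} (π : Equiv.Perm (Fin n)) (a : ℕ) :
    (a ∈ (Finset.range n).filter fun k =>
      ∃ hk : k + 1 < n, (π ⟨k + 1, hk⟩ : ℕ) + 1 < (π ⟨k, Nat.lt_of_succ_lt hk⟩ : ℕ)) ↔
    a + 1 < n ∧ pv π (a + 1) + 1 < pv π a := by
  rw [Finset.mem_filter, Finset.mem_range]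
  constructor
  · rintro ⟨han, hk, hd⟩
    refine ⟨hk, ?_⟩
    rw [pv, dif_pos hk, pv, dif_pos han]
    exact hd
  · rintro ⟨hk, hd⟩
    rw [pv, dif_pos hk, pv, dif_pos (Nat.lt_of_succ_lt hk)] at hd
    exact ⟨Nat.lt_of_succ_lt hk, hk, hd⟩

lemma bdes_rcPerm {n : ℕ} (π : Equiv.Perm (Fin n)) : bdes (rcPerm π) = bdes π := by
  unfold bdes
  refine Finset.card_bij' (fun k _ => n - 2 - k) (fun k _ => n - 2 - k) ?_ ?_ ?_ ?_
  · intro a ha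
    rw [mem_bdes_filter_iff] at ha ⊢
    obtain ⟨hk, hd⟩ := ha
    rw [pv_rcPerm π (by omega : a + 1 < n), pv_rcPerm π (by omega : a < n)] at hd
    have e1 : n - 1 - (a + 1) = n - 2 - a := by omega
    have e2 : n - 2 - a + 1 = n - 1 - a := by omega
    rw [e1] at hd
    rw [e2]
    have b1 : pv π (n - 2 - a) < n := pv_lt π (by omega)
    have b2 : pv π (n - 1 - a) < n := pv_lt π (by omega)
    exact ⟨by omega, by omega⟩
  · intro a ha
    rw [mem_bdes_filter_iff] at ha ⊢
    obtain ⟨hk, hd⟩ := ha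
    refine ⟨by omega, ?_⟩
    rw [pv_rcPerm π (by omega : n - 2 - a + 1 < n), pv_rcPerm π (by omega : n - 2 - a < n)]
    have e1 : n - 1 - (n - 2 - a + 1) = a := by omega
    have e2 : n - 1 - (n - 2 - a) = a + 1 := by omega
    rw [e1, e2]
    have b1 : pv π a < n := pv_lt π (by omega)
    have b2 : pv π (a + 1) < n := pv_lt π hk
    omega
  · intro a ha
    rw [mem_bdes_filter_iff] at ha
    omega
  · intro a ha
    rw [mem_bdes_filter_iff] at ha
    omega

lemma bdes_inv {n : ℕ} {π : Equiv.Perm (Fin n)}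
    (hP : ∀ i j k : Fin n, i < j → i < k → π j < π i → π i < π k → False) :
    bdes π⁻¹ = bdes π := by
  have hP' : ∀ i j k : ℕ, (hi : i < n) → (hj : j < n) → (hk : k < n) → i < j → i < k →
      pv π j < pv π i → pv π i < pv π k → False := by
    intro i j k hi hj hk hij hik h1 h2
    rw [pv_eq π hj, pv_eq π hi] at h1
    rw [pv_eq π hi, pv_eq π hk] at h2
    exact hP ⟨i, hi⟩ ⟨j, hj⟩ ⟨k, hk⟩ (Fin.mk_lt_mk.mpr hij) (Fin.mk_lt_mk.mpr hik)
      (Fin.lt_def.mpr h1) (Fin.lt_def.mpr h2)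
  unfold bdes
  symm
  refine Finset.card_bij (fun a _ => pv π a - 1) ?_ ?_ ?_
  · intro a ha
    rw [mem_bdes_filter_iff] at ha ⊢
    obtain ⟨hk, hd⟩ := ha
    have han : a < n := by omega
    have hu : pv π a < n := pv_lt π han
    have hw : pv π (a + 1) < n := pv_lt π hk
    have hu2 : 2 ≤ pv π a := by omega
    have e1 : pv π a - 1 + 1 = pv π a := by omega
    have hua : pv π⁻¹ (pv π a) = a := (pv_inv π han hu).mpr rfl
    have hp : pv π⁻¹ (pv π a - 1) < n := pv_lt π⁻¹ (by omega)
    have hpv : pv π (pv π⁻¹ (pv π a - 1)) = pv π a - 1 := (pv_inv π hp (by omega)).mp rfl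
    have hap : a + 1 < pv π⁻¹ (pv π a - 1) := by
      rcases Nat.lt_trichotomy (pv π⁻¹ (pv π a - 1)) a with h | h | h
      · have t1 : pv π⁻¹ (pv π a - 1) < a + 1 := by omega
        have t2 : pv π (a + 1) < pv π (pv π⁻¹ (pv π a - 1)) := by omega
        have t3 : pv π (pv π⁻¹ (pv π a - 1)) < pv π a := by omega
        exact absurd (hP' _ _ _ hp hk han t1 h t2 t3) id
      · rw [h] at hpv
        omega
      · rcases Nat.eq_or_lt_of_le (Nat.succ_le_of_lt h) with h' | h'
        · exfalso
          have h'' : a + 1 = pv π⁻¹ (pv π a - 1) := h'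
          have : pv π (a + 1) = pv π a - 1 := by rw [h'']; exact hpv
          omega
        · omega
    rw [e1, hua]
    exact ⟨by omega, by omega⟩
  · intro a1 ha1 a2 ha2 h
    rw [mem_bdes_filter_iff] at ha1 ha2
    have h1 : 2 ≤ pv π a1 := by omega
    have h2 : 2 ≤ pv π a2 := by omega
    exact pv_inj π (by omega) (by omega) (by omega)
  · intro b hb
    rw [mem_bdes_filter_iff] at hb
    obtain ⟨hbk, hbd⟩ := hb
    have hp : pv π⁻¹ b < n := pv_lt π⁻¹ (by omega)
    have ha : pv π⁻¹ (b + 1) < n := pv_lt π⁻¹ hbk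
    have han1 : pv π⁻¹ (b + 1) + 1 < n := by omega
    have hpa : pv π (pv π⁻¹ (b + 1)) = b + 1 := (pv_inv π ha hbk).mp rfl
    have hpp : pv π (pv π⁻¹ b) = b := (pv_inv π hp (by omega)).mp rfl
    have hw : pv π (pv π⁻¹ (b + 1) + 1) < n := pv_lt π han1
    have hwb : pv π (pv π⁻¹ (b + 1) + 1) < b := by
      rcases Nat.lt_trichotomy (pv π (pv π⁻¹ (b + 1) + 1)) b with h | h | h
      · exact h
      · exfalso
        have : pv π⁻¹ b = pv π⁻¹ (b + 1) + 1 := (pv_inv π han1 (by omega)).mpr h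
        omega
      · exfalso
        rcases Nat.eq_or_lt_of_le (Nat.succ_le_of_lt h) with h' | h'
        · have : pv π⁻¹ (b + 1) = pv π⁻¹ (b + 1) + 1 :=
            (pv_inv π han1 hbk).mpr h'.symm
          omega
        · have t1 : pv π⁻¹ (b + 1) < pv π⁻¹ b := by omega
          have t2 : pv π⁻¹ (b + 1) < pv π⁻¹ (b + 1) + 1 := by omega
          have t3 : pv π (pv π⁻¹ b) < pv π (pv π⁻¹ (b + 1)) := by omega
          have t4 : pv π (pv π⁻¹ (b + 1)) < pv π (pv π⁻¹ (b + 1) + 1) := by omega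
          exact hP' _ _ _ ha hp han1 t1 t2 t3 t4
    refine ⟨pv π⁻¹ (b + 1), ?_, ?_⟩
    · rw [mem_bdes_filter_iff]
      exact ⟨han1, by omega⟩
    · omega

lemma rcPerm_perm132 : rcPerm perm132 = perm213 := by decide
lemma rcPerm_perm312 : rcPerm perm312 = perm231 := by decide
lemma rcPerm_perm213 : rcPerm perm213 = perm132 := by decide
lemma rcPerm_perm231 : rcPerm perm231 = perm312 := by decide
lemma perm213_inv : perm213⁻¹ = perm213 := by decide
lemma perm312_inv : perm312⁻¹ = perm231 := by decide
lemma perm231_inv : perm231⁻¹ = perm312 := by decide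


/-- The pattern sets `{213,231}`, `{132,312}`, `{213,312}`, and `{132,231}` are
bdes-Wilf equivalent: for all `n` and `k`, the four counts of permutations of length `n`
avoiding the pair of patterns and having exactly `k` big descents coincide. -/
theorem bdesWilf_classes_size_two (n k : ℕ) :
    Nat.card {π : Equiv.Perm (Fin n) // (Avoids π perm213 ∧ Avoids π perm231) ∧ bdes π = k} =
      Nat.card {π : Equiv.Perm (Fin n) // (Avoids π perm132 ∧ Avoids π perm312) ∧ bdes π = k} ∧
    Nat.card {π : Equiv.Perm (Fin n) // (Avoids π perm213 ∧ Avoids π perm231) ∧ bdes π = k} =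
      Nat.card {π : Equiv.Perm (Fin n) // (Avoids π perm213 ∧ Avoids π perm312) ∧ bdes π = k} ∧
    Nat.card {π : Equiv.Perm (Fin n) // (Avoids π perm213 ∧ Avoids π perm231) ∧ bdes π = k} =
      Nat.card {π : Equiv.Perm (Fin n) // (Avoids π perm132 ∧ Avoids π perm231) ∧ bdes π = k} := by
  have eInv : {π : Equiv.Perm (Fin n) // (Avoids π perm213 ∧ Avoids π perm231) ∧ bdes π = k} ≃
      {π : Equiv.Perm (Fin n) // (Avoids π perm213 ∧ Avoids π perm312) ∧ bdes π = k} :=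
    { toFun := fun x => ⟨x.1⁻¹, by
        obtain ⟨⟨h1, h2⟩, h3⟩ := x.2
        refine ⟨⟨?_, ?_⟩, ?_⟩
        · rw [avoids_inv_iff, perm213_inv]; exact h1
        · rw [avoids_inv_iff, perm312_inv]; exact h2
        · rw [bdes_inv (P_of_avoids h1 h2)]; exact h3⟩
      invFun := fun x => ⟨x.1⁻¹, by
        obtain ⟨⟨h1, h2⟩, h3⟩ := x.2
        have h1' : Avoids x.1⁻¹ perm213 := by rw [avoids_inv_iff, perm213_inv]; exact h1
        have h2' : Avoids x.1⁻¹ perm231 := by rw [avoids_inv_iff, perm231_inv]; exact h2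
        refine ⟨⟨h1', h2'⟩, ?_⟩
        have := bdes_inv (P_of_avoids h1' h2')
        rw [inv_inv] at this
        rw [← this]
        exact h3⟩
      left_inv := fun x => Subtype.ext (inv_inv x.1)
      right_inv := fun x => Subtype.ext (inv_inv x.1) }
  have eRC12 : {π : Equiv.Perm (Fin n) // (Avoids π perm213 ∧ Avoids π perm231) ∧ bdes π = k} ≃
      {π : Equiv.Perm (Fin n) // (Avoids π perm132 ∧ Avoids π perm312) ∧ bdes π = k} :=
    { toFun := fun x => ⟨rcPerm x.1, by
        obtain ⟨⟨h1, h2⟩, h3⟩ := x.2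
        refine ⟨⟨?_, ?_⟩, ?_⟩
        · rw [avoids_rcPerm_iff, rcPerm_perm132]; exact h1
        · rw [avoids_rcPerm_iff, rcPerm_perm312]; exact h2
        · rw [bdes_rcPerm]; exact h3⟩
      invFun := fun x => ⟨rcPerm x.1, by
        obtain ⟨⟨h1, h2⟩, h3⟩ := x.2
        refine ⟨⟨?_, ?_⟩, ?_⟩
        · rw [avoids_rcPerm_iff, rcPerm_perm213]; exact h1
        · rw [avoids_rcPerm_iff, rcPerm_perm231]; exact h2
        · rw [bdes_rcPerm]; exact h3⟩
      left_inv := fun x => Subtype.ext (rcPerm_rcPerm x.1)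
      right_inv := fun x => Subtype.ext (rcPerm_rcPerm x.1) }
  have eRC34 : {π : Equiv.Perm (Fin n) // (Avoids π perm213 ∧ Avoids π perm312) ∧ bdes π = k} ≃
      {π : Equiv.Perm (Fin n) // (Avoids π perm132 ∧ Avoids π perm231) ∧ bdes π = k} :=
    { toFun := fun x => ⟨rcPerm x.1, by
        obtain ⟨⟨h1, h2⟩, h3⟩ := x.2
        refine ⟨⟨?_, ?_⟩, ?_⟩
        · rw [avoids_rcPerm_iff, rcPerm_perm132]; exact h1
        · rw [avoids_rcPerm_iff, rcPerm_perm231]; exact h2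
        · rw [bdes_rcPerm]; exact h3⟩
      invFun := fun x => ⟨rcPerm x.1, by
        obtain ⟨⟨h1, h2⟩, h3⟩ := x.2
        refine ⟨⟨?_, ?_⟩, ?_⟩
        · rw [avoids_rcPerm_iff, rcPerm_perm213]; exact h1
        · rw [avoids_rcPerm_iff, rcPerm_perm312]; exact h2
        · rw [bdes_rcPerm]; exact h3⟩
      left_inv := fun x => Subtype.ext (rcPerm_rcPerm x.1)
      right_inv := fun x => Subtype.ext (rcPerm_rcPerm x.1) }
  exact ⟨Nat.card_congr eRC12, Nat.card_congr eInv, Nat.card_congr (eInv.trans eRC34)⟩
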